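/- (Scalarization.) Under the generalized convexity condition (a1), interior condition (a2), and Slater constraint qualification, x̄ ∈ D is a weakly efficient solution of (VP) if and only if there exists ξ ∈ Y₊* \ {0} such that x̄ is an optimal solution of the scalar problem min_{x ∈ D} ξ(f(x)), i.e., there exists ȳ ∈ f(x̄) with ξ(y) ≥ ξ(ȳ) for all x ∈ D and y ∈ f(x). -/

import Mathlib

open Pointwise

section Aux

lemma aux_nonneg_of_forall {c d : ℝ} (h : ∀ t : ℝ, 0 < t → 0 ≤ t * c + d) : 0 ≤ c := by
  by_contra hc
  push_neg at hc
  set T : ℝ := max 1 ((d + 1) / (-c)) with hT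
  have hT0 : (0 : ℝ) < T := lt_of_lt_of_le one_pos (le_max_left _ _)
  have h2 := h T hT0
  have h3 : (d + 1) / (-c) ≤ T := le_max_right _ _
  rw [div_le_iff₀ (by linarith)] at h3
  nlinarith

variable {E : Type*} [AddCommGroup E] [Module ℝ E] [TopologicalSpace E]
  [IsTopologicalAddGroup E] [ContinuousSMul ℝ E]

lemma aux_cone_add_mem {C : Set E} (hconv : Convex ℝ C)
    (hcone : ∀ t : ℝ, 0 < t → t • C ⊆ C) {a b : E} (ha : a ∈ C) (hb : b ∈ C) :
    a + b ∈ C := by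
  have hmid : (1/2 : ℝ) • a + (1/2 : ℝ) • b ∈ C :=
    hconv ha hb (by norm_num) (by norm_num) (by norm_num)
  have h2 : (2 : ℝ) • ((1/2 : ℝ) • a + (1/2 : ℝ) • b) ∈ (2 : ℝ) • C :=
    Set.smul_mem_smul_set hmid
  have : (2 : ℝ) • ((1/2 : ℝ) • a + (1/2 : ℝ) • b) = a + b := by
    rw [smul_add, smul_smul, smul_smul]; norm_num
  rw [this] at h2
  exact hcone 2 (by norm_num) h2

lemma aux_interior_smul {C : Set E}
    (hcone : ∀ t : ℝ, 0 < t → t • C ⊆ C) {s : ℝ} (hs : 0 < s) {v : E}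
    (hv : v ∈ interior C) : s • v ∈ interior C := by
  have hmap : IsOpenMap (fun x : E => s • x) :=
    (Homeomorph.smulOfNeZero (s : ℝ) (ne_of_gt hs)).isOpenMap
  have hopen : IsOpen ((fun x : E => s • x) '' interior C) := hmap _ isOpen_interior
  have hsub : ((fun x : E => s • x) '' interior C) ⊆ C := by
    rintro _ ⟨x, hx, rfl⟩
    exact hcone s hs (Set.smul_mem_smul_set (interior_subset hx))
  exact interior_maximal hsub hopen ⟨v, hv, rfl⟩

lemma aux_interior_add {C : Set E} (hconv : Convex ℝ C)
    (hcone : ∀ t : ℝ, 0 < t → t • C ⊆ C) {v k : E}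
    (hv : v ∈ interior C) (hk : k ∈ C) : v + k ∈ interior C := by
  have hmap : IsOpenMap (fun x : E => x + k) := isOpenMap_add_right k
  have hopen : IsOpen ((fun x : E => x + k) '' interior C) := hmap _ isOpen_interior
  have hsub : ((fun x : E => x + k) '' interior C) ⊆ C := by
    rintro _ ⟨x, hx, rfl⟩
    exact aux_cone_add_mem hconv hcone (interior_subset hx) hk
  exact interior_maximal hsub hopen ⟨v, hv, rfl⟩

lemma aux_pos_on_interior {C : Set E} {ξ : E →L[ℝ] ℝ} (hξ : ξ ≠ 0)
    (hpos : ∀ y ∈ C, 0 ≤ ξ y) {v : E} (hv : v ∈ interior C) : 0 < ξ v := by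
  obtain ⟨y0, hy0⟩ : ∃ y0, ξ y0 ≠ 0 := by
    by_contra hc
    push_neg at hc
    exact hξ (by ext y; simpa using hc y)
  -- WLOG ξ y0 > 0
  obtain ⟨y1, hy1⟩ : ∃ y1, 0 < ξ y1 := by
    rcases lt_or_gt_of_ne hy0 with h | h
    · exact ⟨-y0, by simpa using neg_pos.mpr h⟩
    · exact ⟨y0, h⟩
  have htend : Filter.Tendsto (fun t : ℝ => v - t • y1) (nhds 0) (nhds v) := by
    have : Filter.Tendsto (fun t : ℝ => v - t • y1) (nhds 0) (nhds (v - (0:ℝ) • y1)) :=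
      (tendsto_const_nhds.sub ((continuous_id.smul continuous_const).tendsto 0))
    simpa using this
  have hev : ∀ᶠ t : ℝ in nhds 0, v - t • y1 ∈ interior C :=
    htend.eventually (isOpen_interior.eventually_mem hv)
  rw [Metric.eventually_nhds_iff] at hev
  obtain ⟨ε, hε, hball⟩ := hev
  have hmem : v - (ε/2) • y1 ∈ C := by
    apply interior_subset
    apply hball
    rw [Real.dist_eq, sub_zero, abs_of_pos (half_pos hε)]
    linarith
  have := hpos _ hmem
  rw [map_sub, map_smul] at this
  have hy1' : 0 < (ε/2) * ξ y1 := mul_pos (half_pos hε) hy1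
  simp only [smul_eq_mul] at this
  linarith

end Aux

/-- Theorem 3.3 (scalarization): under (a1), (a2) and the Slater constraint
qualification, `xbar` is weakly efficient for (VP) iff it solves a scalarized
problem `min ξ(f(x))` for some nonzero `ξ ∈ Y₊*`. -/
theorem scalarization
    {X Y Z W : Type*}
    [AddCommGroup Y] [Module ℝ Y] [TopologicalSpace Y] [IsTopologicalAddGroup Y]
    [ContinuousSMul ℝ Y] [LocallyConvexSpace ℝ Y]
    [AddCommGroup Z] [Module ℝ Z] [TopologicalSpace Z] [IsTopologicalAddGroup Z]
    [ContinuousSMul ℝ Z] [LocallyConvexSpace ℝ Z]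
    [AddCommGroup W] [Module ℝ W] [TopologicalSpace W] [IsTopologicalAddGroup W]
    [ContinuousSMul ℝ W] [LocallyConvexSpace ℝ W]
    (f : X → Set Y) (g : X → Set Z) (h : X → Set W)
    (Ypos : Set Y) (hYconv : Convex ℝ Ypos) (hY0 : (0 : Y) ∈ Ypos)
    (hYcone : ∀ t : ℝ, 0 < t → t • Ypos ⊆ Ypos)
    (hYclosed : IsClosed Ypos) (hYpointed : Ypos ∩ (-Ypos) = {0})
    (hYint : (interior Ypos).Nonempty)
    (Zpos : Set Z) (hZconv : Convex ℝ Zpos) (hZ0 : (0 : Z) ∈ Zpos)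
    (hZcone : ∀ t : ℝ, 0 < t → t • Zpos ⊆ Zpos)
    (hZclosed : IsClosed Zpos) (hZpointed : Zpos ∩ (-Zpos) = {0})
    (hZint : (interior Zpos).Nonempty)
    (D : Set X) (hD : D = {x | (g x ∩ (-Zpos)).Nonempty ∧ (0 : W) ∈ h x})
    (xbar : X) (hxbar : xbar ∈ D)
    -- (a1) and (a2) for the maps `f(·) - ybar`, `g`, `h`:
    (ha : ∀ ybar ∈ f xbar,
      Convex ℝ {p : Y × Z × W |
          p.1 ∈ ⋃ t ∈ Set.Ioi (0 : ℝ),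
              (t • ((⋃ x ∈ D, f x) - {ybar}) + interior Ypos) ∧
          p.2.1 ∈ ⋃ t ∈ Set.Ioi (0 : ℝ), (t • (⋃ x ∈ D, g x) + interior Zpos) ∧
          p.2.2 ∈ ⋃ t ∈ Set.Ioi (0 : ℝ), t • (⋃ x ∈ D, h x)} ∧
      (interior {p : Y × Z × W |
          p.1 ∈ ⋃ t ∈ Set.Ioi (0 : ℝ),
              (t • ((⋃ x ∈ D, f x) - {ybar}) + interior Ypos) ∧
          p.2.1 ∈ ⋃ t ∈ Set.Ioi (0 : ℝ), (t • (⋃ x ∈ D, g x) + interior Zpos) ∧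
          p.2.2 ∈ ⋃ t ∈ Set.Ioi (0 : ℝ), t • (⋃ x ∈ D, h x)}).Nonempty)
    -- Slater constraint qualification:
    (hSlater : ∀ (η : Z →L[ℝ] ℝ) (ζ : W →L[ℝ] ℝ), (∀ z ∈ Zpos, 0 ≤ η z) →
      (η ≠ 0 ∨ ζ ≠ 0) →
      ∃ x ∈ D, ∃ t : ℝ, t < 0 ∧ t ∈ η '' (g x) ∧ t ∈ ζ '' (h x)) :
    (∃ ybar ∈ f xbar, ∀ x ∈ D, ∀ y ∈ f x, ybar - y ∉ interior Ypos) ↔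
      (∃ ξ : Y →L[ℝ] ℝ, ξ ≠ 0 ∧ (∀ y ∈ Ypos, 0 ≤ ξ y) ∧
        ∃ ybar ∈ f xbar, ∀ x ∈ D, ∀ y ∈ f x, ξ ybar ≤ ξ y) := by
  constructor
  · -- forward direction
    rintro ⟨ybar, hybar, hweak⟩
    obtain ⟨hMconv, hMne⟩ := ha ybar hybar
    set M : Set (Y × Z × W) := {p : Y × Z × W |
          p.1 ∈ ⋃ t ∈ Set.Ioi (0 : ℝ),
              (t • ((⋃ x ∈ D, f x) - {ybar}) + interior Ypos) ∧
          p.2.1 ∈ ⋃ t ∈ Set.Ioi (0 : ℝ), (t • (⋃ x ∈ D, g x) + interior Zpos) ∧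
          p.2.2 ∈ ⋃ t ∈ Set.Ioi (0 : ℝ), t • (⋃ x ∈ D, h x)} with hMdef
    -- membership construction for M
    have memM : ∀ t : ℝ, 0 < t → ∀ y ∈ (⋃ x ∈ D, f x), ∀ v ∈ interior Ypos,
        ∀ z ∈ (⋃ x ∈ D, g x), ∀ u ∈ interior Zpos, ∀ w ∈ (⋃ x ∈ D, h x),
        ((t • (y - ybar) + v, t • z + u, t • w) : Y × Z × W) ∈ M := by
      intro t ht y hy v hv z hz u hu w hw
      refine ⟨?_, ?_, ?_⟩
      · simp only [Set.mem_iUnion]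
        exact ⟨t, Set.mem_Ioi.mpr ht,
          Set.add_mem_add (Set.smul_mem_smul_set (Set.sub_mem_sub hy rfl)) hv⟩
      · simp only [Set.mem_iUnion]
        exact ⟨t, Set.mem_Ioi.mpr ht, Set.add_mem_add (Set.smul_mem_smul_set hz) hu⟩
      · simp only [Set.mem_iUnion]
        exact ⟨t, Set.mem_Ioi.mpr ht, Set.smul_mem_smul_set hw⟩
    -- 0 ∉ M
    have h0M : (0 : Y × Z × W) ∉ M := by
      rintro ⟨h1, -, -⟩
      simp only [Set.mem_iUnion] at h1
      obtain ⟨t, ht, h1⟩ := h1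
      rw [Set.mem_Ioi] at ht
      obtain ⟨a, ha', v, hv, hav⟩ := h1
      obtain ⟨b, hb, rfl⟩ := ha'
      obtain ⟨y, hy, c, hc, rfl⟩ := hb
      rw [Set.mem_singleton_iff] at hc
      rw [hc] at hav
      simp only [Set.mem_iUnion] at hy
      obtain ⟨x, hx, hyx⟩ := hy
      -- t • (y - ybar) + v = 0, so ybar - y = t⁻¹ • v ∈ interior Ypos
      have hval : ybar - y = t⁻¹ • v := by
        have h1 : v = -(t • (y - ybar)) := eq_neg_of_add_eq_zero_right hav
        have h2 : v = t • (ybar - y) := by rw [h1, ← smul_neg, neg_sub]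
        rw [h2, smul_smul, inv_mul_cancel₀ (ne_of_gt ht), one_smul]
      have : ybar - y ∈ interior Ypos := by
        rw [hval]
        exact aux_interior_smul hYcone (inv_pos.mpr ht) hv
      exact hweak x hx y hyx this
    -- separation
    have hdisj : Disjoint (interior M) ({(0 : Y × Z × W)} : Set (Y × Z × W)) := by
      rw [Set.disjoint_singleton_right]
      exact fun hc => h0M (interior_subset hc)
    obtain ⟨ℓf, u, hfu, hu0⟩ :=
      geometric_hahn_banach_open hMconv.interior isOpen_interior
        (convex_singleton (0 : Y × Z × W)) hdisj
    have hu0' : u ≤ 0 := by simpa using hu0 0 rfl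
    have hneg : ∀ p ∈ interior M, ℓf p < 0 := fun p hp => lt_of_lt_of_le (hfu p hp) hu0'
    -- ℓf ≤ 0 on all of M
    obtain ⟨q, hq⟩ := hMne
    have hle : ∀ p ∈ M, ℓf p ≤ 0 := by
      intro p hp
      by_contra hc
      push_neg at hc
      have hq' := hneg q hq
      set a : ℝ := ℓf p / (ℓf p - ℓf q) with hadef
      have hden : 0 < ℓf p - ℓf q := by linarith
      have ha0 : 0 < a := div_pos hc hden
      have ha1 : a < 1 := by
        rw [div_lt_one hden]; linarith
      have hcombo : a • q + (1 - a) • p ∈ interior M :=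
        hMconv.combo_interior_self_mem_interior hq hp ha0 (by linarith) (by ring)
      have hae : a * (ℓf p - ℓf q) = ℓf p := by
        rw [hadef]; field_simp
      have := hneg _ hcombo
      rw [map_add, map_smul, map_smul] at this
      simp only [smul_eq_mul] at this
      nlinarith [hae]
    set ℓ : (Y × Z × W) →L[ℝ] ℝ := -ℓf with hldef
    have hpos : ∀ p ∈ M, 0 ≤ ℓ p := by
      intro p hp
      simp only [hldef, ContinuousLinearMap.neg_apply]
      linarith [hle p hp]
    set ξ : Y →L[ℝ] ℝ := ℓ.comp (ContinuousLinearMap.inl ℝ Y (Z × W)) with hξdef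
    set η : Z →L[ℝ] ℝ :=
      ℓ.comp ((ContinuousLinearMap.inr ℝ Y (Z × W)).comp
        (ContinuousLinearMap.inl ℝ Z W)) with hηdef
    set ζ : W →L[ℝ] ℝ :=
      ℓ.comp ((ContinuousLinearMap.inr ℝ Y (Z × W)).comp
        (ContinuousLinearMap.inr ℝ Z W)) with hζdef
    have hsplit : ∀ (y : Y) (z : Z) (w : W), ℓ (y, z, w) = ξ y + η z + ζ w := by
      intro y z w
      simp only [hξdef, hηdef, hζdef, ContinuousLinearMap.comp_apply,
        ContinuousLinearMap.inl_apply, ContinuousLinearMap.inr_apply]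
      rw [← map_add, ← map_add]
      congr 1
      simp [Prod.ext_iff]
    -- fixed interior points
    obtain ⟨v0, hv0⟩ := hYint
    obtain ⟨u0, hu0Z⟩ := hZint
    have hybarF : ybar ∈ ⋃ x ∈ D, f x := by
      simp only [Set.mem_iUnion]; exact ⟨xbar, hxbar, hybar⟩
    have hxbarD := hxbar
    rw [hD] at hxbarD
    obtain ⟨⟨z0, hz0g, hz0neg⟩, h0h⟩ := hxbarD
    have hz0G : z0 ∈ ⋃ x ∈ D, g x := by
      simp only [Set.mem_iUnion]; exact ⟨xbar, hxbar, hz0g⟩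
    have h0H : (0 : W) ∈ ⋃ x ∈ D, h x := by
      simp only [Set.mem_iUnion]; exact ⟨xbar, hxbar, h0h⟩
    -- key inequality
    have key : ∀ y ∈ (⋃ x ∈ D, f x), ∀ z ∈ (⋃ x ∈ D, g x), ∀ w ∈ (⋃ x ∈ D, h x),
        0 ≤ ξ (y - ybar) + η z + ζ w := by
      intro y hy z hz w hw
      apply aux_nonneg_of_forall (d := ξ v0 + η u0)
      intro t ht
      have := hpos _ (memM t ht y hy v0 hv0 z hz u0 hu0Z w hw)
      rw [hsplit] at this
      rw [map_add, map_add, map_smul, map_smul, map_smul] at this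
      simp only [smul_eq_mul] at this
      linarith
    -- positivity of ξ on Ypos
    have hξpos : ∀ k ∈ Ypos, 0 ≤ ξ k := by
      intro k hk
      apply aux_nonneg_of_forall
          (d := ξ ((1:ℝ) • (ybar - ybar) + v0) + η ((1:ℝ) • z0 + u0) + ζ ((1:ℝ) • (0 : W)))
      intro s hs
      have hvk : v0 + s • k ∈ interior Ypos :=
        aux_interior_add hYconv hYcone hv0 (hYcone s hs (Set.smul_mem_smul_set hk))
      have := hpos _ (memM 1 one_pos ybar hybarF (v0 + s • k) hvk z0 hz0G u0 hu0Z 0 h0H)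
      rw [hsplit] at this
      have hrw : ξ ((1:ℝ) • (ybar - ybar) + (v0 + s • k))
          = s * ξ k + ξ ((1:ℝ) • (ybar - ybar) + v0) := by
        simp only [map_add, map_smul, smul_eq_mul]
        ring
      rw [hrw] at this
      linarith
    -- positivity of η on Zpos
    have hηpos : ∀ k ∈ Zpos, 0 ≤ η k := by
      intro k hk
      apply aux_nonneg_of_forall
          (d := ξ ((1:ℝ) • (ybar - ybar) + v0) + η ((1:ℝ) • z0 + u0) + ζ ((1:ℝ) • (0 : W)))
      intro s hs
      have huk : u0 + s • k ∈ interior Zpos :=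
        aux_interior_add hZconv hZcone hu0Z (hZcone s hs (Set.smul_mem_smul_set hk))
      have hmem := memM 1 one_pos ybar hybarF v0 hv0 z0 hz0G (u0 + s • k) huk 0 h0H
      have h2 : ((1:ℝ) • z0 + (u0 + s • k)) = ((1:ℝ) • z0 + u0) + s • k := by
        abel
      rw [h2] at hmem
      have := hpos _ hmem
      rw [hsplit] at this
      rw [map_add (f := η), map_smul] at this
      simp only [smul_eq_mul] at this
      linarith
    -- ξ ≠ 0
    have hξne : ξ ≠ 0 := by
      intro hξ0
      have hℓne : (η ≠ 0 ∨ ζ ≠ 0) := by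
        by_contra hc
        push_neg at hc
        obtain ⟨hη0, hζ0⟩ := hc
        have hq' := hneg q hq
        have : ℓf q = 0 := by
          have : ℓ q = 0 := by
            obtain ⟨qy, qz, qw⟩ := q
            rw [hsplit, hξ0, hη0, hζ0]; simp
          simpa [hldef, neg_eq_zero] using this
        linarith
      obtain ⟨x, hx, t, ht, ⟨z, hzg, hzt⟩, ⟨w, hwh, hwt⟩⟩ := hSlater η ζ hηpos hℓne
      have hzG : z ∈ ⋃ x ∈ D, g x := by
        simp only [Set.mem_iUnion]; exact ⟨x, hx, hzg⟩
      have hwH : w ∈ ⋃ x ∈ D, h x := by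
        simp only [Set.mem_iUnion]; exact ⟨x, hx, hwh⟩
      have := key ybar hybarF z hzG w hwH
      rw [hξ0] at this
      simp only [ContinuousLinearMap.zero_apply, zero_add] at this
      rw [hzt, hwt] at this
      linarith
    refine ⟨ξ, hξne, hξpos, ybar, hybar, ?_⟩
    intro x hx y hy
    have hxD := hx
    rw [hD] at hxD
    obtain ⟨⟨z, hzg, hzneg⟩, h0hx⟩ := hxD
    have hyF : y ∈ ⋃ x ∈ D, f x := by
      simp only [Set.mem_iUnion]; exact ⟨x, hx, hy⟩
    have hzG : z ∈ ⋃ x ∈ D, g x := by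
      simp only [Set.mem_iUnion]; exact ⟨x, hx, hzg⟩
    have h0Hx : (0 : W) ∈ ⋃ x ∈ D, h x := by
      simp only [Set.mem_iUnion]; exact ⟨x, hx, h0hx⟩
    have hkey := key y hyF z hzG 0 h0Hx
    have hηz : η z ≤ 0 := by
      have : -z ∈ Zpos := by
        rw [Set.mem_neg] at hzneg; exact hzneg
      have := hηpos _ this
      rw [map_neg] at this
      linarith
    rw [map_sub, map_zero] at hkey
    linarith
  · -- backward direction
    rintro ⟨ξ, hξ0, hξpos, ybar, hybar, hmin⟩
    refine ⟨ybar, hybar, ?_⟩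
    intro x hx y hy hmem
    have hpos := aux_pos_on_interior hξ0 hξpos hmem
    rw [map_sub] at hpos
    have := hmin x hx y hy
    linarith
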